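/- If d'(s,t) < d(s,t) and y ∈ P_v(t) (y is a predecessor of t with respect to source v in G), then d'(s,y) < d(s,y). -/

import Mathlib

open scoped BigOperators

/-- A directed graph on vertex set `V` with positive real edge weights. -/
structure WDigraph (V : Type*) where
  /-- the edge relation -/
  E : V → V → Prop
  /-- the edge weights -/
  w : V → V → ℝ
  /-- weights of edges are positive -/
  pos : ∀ a b, E a b → 0 < w a b

namespace WDigraph

variable {V : Type*} [Fintype V] [DecidableEq V]

/-- `p` is a simple path from `s` to `t` in `G`: a nonempty list of pairwise
distinct vertices starting at `s`, ending at `t`, consecutive vertices joined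
by edges. (Since all weights are positive, every shortest path is simple, so
it suffices to consider simple paths throughout.) -/
def IsPath (G : WDigraph V) (s t : V) (p : List V) : Prop :=
  List.Chain' G.E p ∧ p.head? = some s ∧ p.getLast? = some t ∧ p.Nodup

/-- The total weight of a list of vertices (sum of the weights of consecutive pairs). -/
def pw (G : WDigraph V) : List V → ℝ
  | [] => 0
  | [_] => 0
  | a :: b :: r => G.w a b + G.pw (b :: r)

/-- `d(s,t)`: shortest-path distance from `s` to `t`, equal to `⊤` (infinity)
if `t` is unreachable from `s`. -/
noncomputable def dist (G : WDigraph V) (s t : V) : EReal :=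
  sInf ((fun p => (G.pw p : EReal)) '' {p | G.IsPath s t p})

/-- The set of shortest `s`-`t` paths in `G`. -/
def SP (G : WDigraph V) (s t : V) : Set (List V) :=
  {p | G.IsPath s t p ∧ (G.pw p : EReal) = G.dist s t}

/-- `σ_{st}`: the number of shortest `s`-`t` paths in `G`. -/
noncomputable def sigma (G : WDigraph V) (s t : V) : ℕ :=
  (G.SP s t).ncard

/-- `σ_{st}(v)`: the number of shortest `s`-`t` paths in `G` that contain `v`. -/
noncomputable def sigmaV (G : WDigraph V) (s t v : V) : ℕ :=
  {p ∈ G.SP s t | v ∈ p}.ncard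

/-- `σ_{st}(v,w)`: the number of shortest `s`-`t` paths in `G` using the edge `(v,w)`. -/
noncomputable def sigmaE (G : WDigraph V) (s t v w : V) : ℕ :=
  {p ∈ G.SP s t | [v, w] <:+: p}.ncard

/-- `P_s(t)`: the set of predecessors of `t` with respect to source `s`:
nodes `y` with `(y,t) ∈ E` and `d(s,y) + ω(y,t) = d(s,t) < ∞`. -/
def pred (G : WDigraph V) (s t : V) : Set V :=
  {y | G.E y t ∧ G.dist s y + (G.w y t : EReal) = G.dist s t ∧ G.dist s t < ⊤}

/-- `δ_{s•}(v)`: Brandes's one-sided dependency of `s` on `v`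
(a summand is `0` whenever its denominator is `0`, which is automatic since
in Lean division by zero yields zero). -/
noncomputable def delta (G : WDigraph V) (s v : V) : ℝ :=
  ∑ᶠ t ∈ {t : V | t ≠ s ∧ t ≠ v}, (G.sigmaV s t v : ℝ) / (G.sigma s t : ℝ)

/-- `c_B(v)`: the betweenness centrality of `v`. -/
noncomputable def bc (G : WDigraph V) (v : V) : ℝ :=
  ∑ᶠ s ∈ {s : V | s ≠ v}, G.delta s v

/-- `G'` is obtained from `G` by the incremental update `(u, v, ω'(u,v))`:
either a new edge `(u,v) ∉ E` is inserted with positive weight, or the weight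
of the existing edge `(u,v)` is decreased; all other edges and weights are
unchanged. (Positivity of all weights is part of the `WDigraph` structure.) -/
structure IsUpdate (G G' : WDigraph V) (u v : V) : Prop where
  /-- the updated edge is present in `G'` -/
  edge' : G'.E u v
  /-- `E' = E ∪ {(u,v)}` -/
  edge_iff : ∀ a b, G'.E a b ↔ G.E a b ∨ a = u ∧ b = v
  /-- `ω'` agrees with `ω` on all edges other than `(u,v)` -/
  weight_eq : ∀ a b, ¬(a = u ∧ b = v) → G'.w a b = G.w a b
  /-- either an insertion of a new edge, or a weight decrease of an existing one -/
  insert_or_decrease : ¬ G.E u v ∨ (G.E u v ∧ G'.w u v < G.w u v)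

/-- `S(t)`: the affected sources of `t`. -/
def affS (G G' : WDigraph V) (t : V) : Set V :=
  {s | G.dist s t > G'.dist s t ∨ G.sigma s t ≠ G'.sigma s t}

/-- `T(s)`: the affected targets of `s`. -/
def affT (G G' : WDigraph V) (s : V) : Set V :=
  {t | G.dist s t > G'.dist s t ∨ G.sigma s t ≠ G'.sigma s t}

/-- `Δ_{s•}(v) = Σ_{t ∈ T(s), t ≠ v} σ_{st}(v)/σ_{st}`, computed in `G`
(`0`-convention for zero denominators). -/
noncomputable def Delta (G G' : WDigraph V) (s v : V) : ℝ :=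
  ∑ᶠ t ∈ {t : V | t ∈ affT G G' s ∧ t ≠ v}, (G.sigmaV s t v : ℝ) / (G.sigma s t : ℝ)

/-- `Δ'_{s•}(v) = Σ_{t ∈ T(s), t ≠ v} σ'_{st}(v)/σ'_{st}`, computed in `G'`
(`0`-convention for zero denominators). -/
noncomputable def Delta' (G G' : WDigraph V) (s v : V) : ℝ :=
  ∑ᶠ t ∈ {t : V | t ∈ affT G G' s ∧ t ≠ v}, (G'.sigmaV s t v : ℝ) / (G'.sigma s t : ℝ)

/-! ### Auxiliary lemmas -/

lemma pw_cons_cons (G : WDigraph V) (a b : V) (r : List V) :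
    G.pw (a :: b :: r) = G.w a b + G.pw (b :: r) := rfl

lemma pw_append_cons (G : WDigraph V) (l₁ : List V) (x : V) (l₂ : List V) :
    G.pw (l₁ ++ x :: l₂) = G.pw (l₁ ++ [x]) + G.pw (x :: l₂) := by
  induction l₁ with
  | nil => simp [pw]
  | cons a l ih =>
    cases l with
    | nil => simp [pw]
    | cons b l' =>
      have h1 : G.pw ((a :: b :: l') ++ x :: l₂) = G.w a b + G.pw ((b :: l') ++ x :: l₂) := rfl
      have h2 : G.pw ((a :: b :: l') ++ [x]) = G.w a b + G.pw ((b :: l') ++ [x]) := rfl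
      rw [h1, h2, ih]; ring

lemma pw_nonneg (G : WDigraph V) : ∀ {p : List V}, List.Chain' G.E p → 0 ≤ G.pw p
  | [], _ => le_refl 0
  | [_], _ => le_refl 0
  | a :: b :: r, h => by
    have hab : G.E a b := (List.isChain_cons_cons.mp h).1
    have h1 := pw_nonneg G (List.isChain_cons_cons.mp h).2
    have h2 := G.pos a b hab
    rw [pw_cons_cons]; linarith

lemma dist_nonneg' (G : WDigraph V) (s t : V) : (0 : EReal) ≤ G.dist s t := by
  apply le_sInf
  rintro x ⟨p, hp, rfl⟩
  show (0 : EReal) ≤ (G.pw p : EReal)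
  exact_mod_cast G.pw_nonneg hp.1

lemma dist_ne_bot (G : WDigraph V) (s t : V) : G.dist s t ≠ ⊥ :=
  (lt_of_lt_of_le EReal.bot_lt_zero (G.dist_nonneg' s t)).ne'

lemma exists_dup_split {l : List V} (h : ¬ l.Nodup) :
    ∃ (a : List V) (x : V) (b c : List V), l = a ++ x :: (b ++ x :: c) := by
  induction l with
  | nil => simp at h
  | cons hd tl ih =>
    by_cases hmem : hd ∈ tl
    · obtain ⟨b, c, rfl⟩ := List.append_of_mem hmem
      exact ⟨[], hd, b, c, rfl⟩
    · have htl : ¬ tl.Nodup := fun hn => h (List.nodup_cons.mpr ⟨hmem, hn⟩)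
      obtain ⟨a, x, b, c, rfl⟩ := ih htl
      exact ⟨hd :: a, x, b, c, rfl⟩

lemma head?_append_cons (l : List V) (x : V) (m m' : List V) :
    (l ++ x :: m).head? = (l ++ x :: m').head? := by cases l <;> rfl

/-- Any walk (not necessarily simple) from `s` to `t` has weight at least `d(s,t)`. -/
lemma dist_le_pw (G : WDigraph V) (s t : V) :
    ∀ (n : ℕ) (p : List V), p.length ≤ n → List.Chain' G.E p →
      p.head? = some s → p.getLast? = some t → G.dist s t ≤ (G.pw p : EReal) := by
  intro n
  induction n with
  | zero =>
    intro p hl hc hh hlast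
    cases p <;> simp_all
  | succ n ih =>
    intro p hl hc hh hlast
    by_cases hnd : p.Nodup
    · exact sInf_le ⟨p, ⟨hc, hh, hlast, hnd⟩, rfl⟩
    · obtain ⟨a, x, b, c, rfl⟩ := exists_dup_split hnd
      obtain ⟨h1, h2⟩ := List.isChain_split.mp hc
      have h2' : List.Chain' G.E ((x :: b) ++ x :: c) := h2
      obtain ⟨h3, h4⟩ := List.isChain_split.mp h2'
      have hcq : List.Chain' G.E (a ++ x :: c) := List.isChain_split.mpr ⟨h1, h4⟩
      have hhq : (a ++ x :: c).head? = some s := by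
        rw [head?_append_cons a x c (b ++ x :: c)]; exact hh
      have hlq : (a ++ x :: c).getLast? = some t := by
        rw [List.getLast?_append_cons] at hlast ⊢
        have : (x :: (b ++ x :: c)).getLast? = ((x :: b) ++ x :: c).getLast? := by simp
        rw [this, List.getLast?_append_cons] at hlast
        exact hlast
      have hlen : (a ++ x :: c).length ≤ n := by
        simp only [List.length_append, List.length_cons] at hl ⊢
        omega
      have hle := ih (a ++ x :: c) hlen hcq hhq hlq
      have hpwle : G.pw (a ++ x :: c) ≤ G.pw (a ++ x :: (b ++ x :: c)) := by
        rw [pw_append_cons, pw_append_cons G a x (b ++ x :: c)]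
        have e1 : G.pw (x :: (b ++ x :: c)) = G.pw ((x :: b) ++ x :: c) := by simp
        rw [e1, pw_append_cons G (x :: b) x c]
        have h0 : 0 ≤ G.pw ((x :: b) ++ [x]) := G.pw_nonneg h3
        linarith
      exact le_trans hle (by exact_mod_cast hpwle)

/-- If `d(s,t) < ⊤` then some (simple) path attains the infimum. -/
lemma exists_shortest (G : WDigraph V) {s t : V} (h : G.dist s t < ⊤) :
    ∃ p, G.IsPath s t p ∧ (G.pw p : EReal) = G.dist s t := by
  have hfin : {p | G.IsPath s t p}.Finite := by
    apply (List.finite_length_le V (Fintype.card V)).subset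
    intro p hp
    exact hp.2.2.2.length_le_card
  have hfin' : ((fun p => (G.pw p : EReal)) '' {p | G.IsPath s t p}).Finite := hfin.image _
  have hne : ((fun p => (G.pw p : EReal)) '' {p | G.IsPath s t p}).Nonempty := by
    by_contra hne
    rw [Set.not_nonempty_iff_eq_empty] at hne
    have hd : G.dist s t = sInf ((fun p => (G.pw p : EReal)) '' {p | G.IsPath s t p}) := rfl
    rw [hd, hne, sInf_empty] at h
    exact lt_irrefl _ h
  obtain ⟨p, hp, hpw⟩ := hne.csInf_mem hfin'
  exact ⟨p, hp, hpw⟩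

/-- Triangle inequality through a final edge. -/
lemma dist_le_dist_add_w (G : WDigraph V) (s y t : V) (hE : G.E y t) :
    G.dist s t ≤ G.dist s y + (G.w y t : EReal) := by
  rcases eq_top_or_lt_top (G.dist s y) with h | h
  · rw [h, EReal.top_add_coe]; exact le_top
  · obtain ⟨p, ⟨hc, hh, hlast, hnd⟩, hpw⟩ := G.exists_shortest h
    obtain ⟨p', rfl⟩ : ∃ p', p = p' ++ [y] := by
      rcases p.eq_nil_or_concat with rfl | ⟨p', a, he⟩
      · simp at hlast
      · rw [List.concat_eq_append] at he
        subst he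
        rw [List.getLast?_concat] at hlast
        obtain rfl : a = y := by injection hlast
        exact ⟨p', rfl⟩
    have hcq : List.Chain' G.E (p' ++ y :: [t]) :=
      List.isChain_split.mpr ⟨hc, List.isChain_pair.mpr hE⟩
    have hhq : (p' ++ y :: [t]).head? = some s := by
      rw [head?_append_cons p' y [t] []]; exact hh
    have hlq : (p' ++ y :: [t]).getLast? = some t := by
      rw [List.getLast?_append_cons]; rfl
    have hle := G.dist_le_pw s t (p' ++ y :: [t]).length (p' ++ y :: [t]) le_rfl hcq hhq hlq
    have hpweq : G.pw (p' ++ y :: [t]) = G.pw (p' ++ [y]) + G.w y t := by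
      rw [pw_append_cons]
      have : G.pw (y :: [t]) = G.w y t + G.pw [t] := rfl
      rw [this]
      simp [pw]
    rw [hpweq] at hle
    calc G.dist s t ≤ ((G.pw (p' ++ [y]) + G.w y t : ℝ) : EReal) := hle
      _ = (G.pw (p' ++ [y]) : EReal) + (G.w y t : EReal) := EReal.coe_add _ _
      _ = G.dist s y + (G.w y t : EReal) := by rw [hpw]

/-- Triangle inequality. -/
lemma dist_triangle (G : WDigraph V) (s m t : V) :
    G.dist s t ≤ G.dist s m + G.dist m t := by
  rcases eq_top_or_lt_top (G.dist s m) with h1 | h1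
  · rw [h1, EReal.top_add_of_ne_bot (G.dist_ne_bot m t)]; exact le_top
  rcases eq_top_or_lt_top (G.dist m t) with h2 | h2
  · rw [h2, EReal.add_top_of_ne_bot (G.dist_ne_bot s m)]; exact le_top
  obtain ⟨p, ⟨hc, hh, hlast, hnd⟩, hpw⟩ := G.exists_shortest h1
  obtain ⟨q, ⟨hcq, hhq, hlastq, hndq⟩, hpwq⟩ := G.exists_shortest h2
  obtain ⟨p', rfl⟩ : ∃ p', p = p' ++ [m] := by
    rcases p.eq_nil_or_concat with rfl | ⟨p', a, he⟩
    · simp at hlast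
    · rw [List.concat_eq_append] at he
      subst he
      rw [List.getLast?_concat] at hlast
      obtain rfl : a = m := by injection hlast
      exact ⟨p', rfl⟩
  obtain ⟨q', rfl⟩ : ∃ q', q = m :: q' := by
    cases q with
    | nil => simp at hhq
    | cons a q' =>
      obtain rfl : a = m := by injection hhq
      exact ⟨q', rfl⟩
  have hcw : List.Chain' G.E (p' ++ m :: q') := List.isChain_split.mpr ⟨hc, hcq⟩
  have hhw : (p' ++ m :: q').head? = some s := by
    rw [head?_append_cons p' m q' []]; exact hh
  have hlw : (p' ++ m :: q').getLast? = some t := by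
    rw [List.getLast?_append_cons]; exact hlastq
  have hle := G.dist_le_pw s t (p' ++ m :: q').length (p' ++ m :: q') le_rfl hcw hhw hlw
  have hpweq : G.pw (p' ++ m :: q') = G.pw (p' ++ [m]) + G.pw (m :: q') := pw_append_cons G p' m q'
  rw [hpweq] at hle
  calc G.dist s t ≤ ((G.pw (p' ++ [m]) + G.pw (m :: q') : ℝ) : EReal) := hle
    _ = (G.pw (p' ++ [m]) : EReal) + (G.pw (m :: q') : EReal) := EReal.coe_add _ _
    _ = G.dist s m + G.dist m t := by rw [hpw, hpwq]

lemma IsUpdate.pw_le {G G' : WDigraph V} {u v : V} (h : IsUpdate G G' u v) :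
    ∀ {p : List V}, List.Chain' G.E p → G'.pw p ≤ G.pw p
  | [], _ => le_refl _
  | [_], _ => le_refl _
  | a :: b :: r, hc => by
    obtain ⟨hab, hc'⟩ := List.isChain_cons_cons.mp hc
    have ih := h.pw_le hc'
    have hw : G'.w a b ≤ G.w a b := by
      by_cases hab' : a = u ∧ b = v
      · obtain ⟨rfl, rfl⟩ := hab'
        rcases h.insert_or_decrease with h' | h'
        · exact absurd hab h'
        · exact h'.2.le
      · rw [h.weight_eq a b hab']
    rw [pw_cons_cons, pw_cons_cons]; linarith

lemma IsUpdate.dist_le {G G' : WDigraph V} {u v : V} (h : IsUpdate G G' u v) (a b : V) :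
    G'.dist a b ≤ G.dist a b := by
  apply le_sInf
  rintro x ⟨p, hp, rfl⟩
  have hc' : List.Chain' G'.E p :=
    hp.1.imp (fun x y hxy => (h.edge_iff x y).mpr (Or.inl hxy))
  calc G'.dist a b ≤ (G'.pw p : EReal) :=
        sInf_le ⟨p, ⟨hc', hp.2.1, hp.2.2.1, hp.2.2.2⟩, rfl⟩
    _ ≤ (G.pw p : EReal) := EReal.coe_le_coe_iff.mpr (h.pw_le hp.1)

lemma not_infix_of_getLast {p : List V} {u v : V} (hnd : p.Nodup)
    (hl : p.getLast? = some u) : ¬ [u, v] <:+: p := by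
  rintro ⟨l, m, rfl⟩
  have hnd' : (l ++ u :: v :: m).Nodup := by simpa using hnd
  have h2 : u ∉ v :: m := (List.nodup_cons.mp hnd'.of_append_right).1
  have hl' : (v :: m).getLast? = some u := by
    simp only [List.append_assoc, List.cons_append, List.nil_append] at hl
    rw [List.getLast?_append_cons] at hl
    have e : (u :: v :: m) = [u] ++ v :: m := rfl
    rw [e, List.getLast?_append_cons] at hl
    exact hl
  apply h2
  rcases (v :: m).eq_nil_or_concat with he | ⟨l', a, he⟩
  · simp at he
  · rw [List.concat_eq_append] at he
    rw [he, List.getLast?_concat] at hl'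
    obtain rfl : a = u := by injection hl'
    rw [he]; simp

lemma not_infix_of_head {p : List V} {u v : V} (hnd : p.Nodup)
    (hh : p.head? = some v) : ¬ [u, v] <:+: p := by
  rintro ⟨l, m, rfl⟩
  cases l with
  | nil =>
    have hu : u = v := by simpa using hh
    have hnd' : (u :: v :: m).Nodup := by simpa using hnd
    rw [hu] at hnd'
    simp at hnd'
  | cons a l' =>
    have ha : a = v := by simpa using hh
    have hnd' : (a :: (l' ++ u :: v :: m)).Nodup := by simpa using hnd
    rw [ha] at hnd'
    have := (List.nodup_cons.mp hnd').1
    exact this (by simp)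

lemma IsUpdate.chain_pw_of_not_infix {G G' : WDigraph V} {u v : V} (h : IsUpdate G G' u v) :
    ∀ {p : List V}, List.Chain' G'.E p → ¬ [u, v] <:+: p →
      List.Chain' G.E p ∧ G.pw p = G'.pw p
  | [], _, _ => ⟨List.isChain_nil, rfl⟩
  | [_], _, _ => ⟨List.isChain_singleton _, rfl⟩
  | a :: b :: r, hc, hni => by
    obtain ⟨hab, hc'⟩ := List.isChain_cons_cons.mp hc
    have hne : ¬ (a = u ∧ b = v) := by
      rintro ⟨rfl, rfl⟩
      exact hni ⟨[], r, rfl⟩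
    have hni' : ¬ [u, v] <:+: (b :: r) := by
      rintro ⟨l, m, hE⟩
      exact hni ⟨a :: l, m, by rw [List.cons_append, List.cons_append, hE]⟩
    obtain ⟨hcg, hpw⟩ := h.chain_pw_of_not_infix hc' hni'
    have hEg : G.E a b := ((h.edge_iff a b).mp hab).resolve_right hne
    refine ⟨List.isChain_cons_cons.mpr ⟨hEg, hcg⟩, ?_⟩
    rw [pw_cons_cons, pw_cons_cons, hpw, h.weight_eq a b hne]

/-- Key lemma: if the distance strictly improved, every new shortest path goes
through the updated edge, so `d(s,u) + ω'(u,v) + d(v,t) ≤ d'(s,t)`. -/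
lemma IsUpdate.key {G G' : WDigraph V} {u v : V} (h : IsUpdate G G' u v) {s t : V}
    (hst : G'.dist s t < G.dist s t) :
    G.dist s u + (G'.w u v : EReal) + G.dist v t ≤ G'.dist s t := by
  have htop : G'.dist s t < ⊤ := lt_of_lt_of_le hst le_top
  obtain ⟨p, ⟨hc, hh, hlast, hnd⟩, hpw⟩ := G'.exists_shortest htop
  by_cases hinf : [u, v] <:+: p
  · obtain ⟨l₁, l₂, rfl⟩ := hinf
    have hpform : l₁ ++ [u, v] ++ l₂ = l₁ ++ u :: v :: l₂ := by simp
    rw [hpform] at hc hh hlast hnd hpw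
    -- prefix path q₁ = l₁ ++ [u]
    have hpre : (l₁ ++ [u]) <+: (l₁ ++ u :: v :: l₂) := ⟨v :: l₂, by simp⟩
    have hc₁ : List.Chain' G'.E (l₁ ++ [u]) := hc.prefix hpre
    have hnd₁ : (l₁ ++ [u]).Nodup := hnd.sublist hpre.sublist
    have hl₁ : (l₁ ++ [u]).getLast? = some u := List.getLast?_concat
    have hh₁ : (l₁ ++ [u]).head? = some s := by
      have : (l₁ ++ [u]) = l₁ ++ u :: ([] : List V) := rfl
      rw [this, head?_append_cons l₁ u [] (v :: l₂)]; exact hh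
    have hni₁ : ¬ [u, v] <:+: (l₁ ++ [u]) := not_infix_of_getLast hnd₁ hl₁
    obtain ⟨hcg₁, hpw₁⟩ := h.chain_pw_of_not_infix hc₁ hni₁
    have hd₁ : G.dist s u ≤ (G'.pw (l₁ ++ [u]) : EReal) := by
      rw [← hpw₁]
      exact sInf_le ⟨l₁ ++ [u], ⟨hcg₁, hh₁, hl₁, hnd₁⟩, rfl⟩
    -- suffix path q₂ = v :: l₂
    have hsuf : (v :: l₂) <:+ (l₁ ++ u :: v :: l₂) := ⟨l₁ ++ [u], by simp⟩
    have hc₂ : List.Chain' G'.E (v :: l₂) := hc.suffix hsuf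
    have hnd₂ : (v :: l₂).Nodup := hnd.sublist hsuf.sublist
    have hh₂ : (v :: l₂).head? = some v := rfl
    have hl₂ : (v :: l₂).getLast? = some t := by
      rw [List.getLast?_append_cons] at hlast
      have e : (u :: v :: l₂) = [u] ++ v :: l₂ := rfl
      rw [e, List.getLast?_append_cons] at hlast
      exact hlast
    have hni₂ : ¬ [u, v] <:+: (v :: l₂) := not_infix_of_head hnd₂ hh₂
    obtain ⟨hcg₂, hpw₂⟩ := h.chain_pw_of_not_infix hc₂ hni₂
    have hd₂ : G.dist v t ≤ (G'.pw (v :: l₂) : EReal) := by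
      rw [← hpw₂]
      exact sInf_le ⟨v :: l₂, ⟨hcg₂, hh₂, hl₂, hnd₂⟩, rfl⟩
    -- split the weight
    have hpwsplit : G'.pw (l₁ ++ u :: v :: l₂)
        = G'.pw (l₁ ++ [u]) + (G'.w u v + G'.pw (v :: l₂)) := by
      rw [pw_append_cons G' l₁ u (v :: l₂)]
      rfl
    calc G.dist s u + (G'.w u v : EReal) + G.dist v t
        ≤ (G'.pw (l₁ ++ [u]) : EReal) + (G'.w u v : EReal) + (G'.pw (v :: l₂) : EReal) :=
          add_le_add (add_le_add hd₁ le_rfl) hd₂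
      _ = ((G'.pw (l₁ ++ [u]) + (G'.w u v + G'.pw (v :: l₂)) : ℝ) : EReal) := by
          rw [EReal.coe_add, EReal.coe_add, add_assoc]
      _ = (G'.pw (l₁ ++ u :: v :: l₂) : EReal) := by rw [← hpwsplit]
      _ = G'.dist s t := hpw
  · obtain ⟨hcg, hpwg⟩ := h.chain_pw_of_not_infix hc hinf
    have hle : G.dist s t ≤ (G.pw p : EReal) := sInf_le ⟨p, ⟨hcg, hh, hlast, hnd⟩, rfl⟩
    rw [hpwg, hpw] at hle
    exact absurd hst (not_lt.mpr hle)

/-- If `d'(s,t) < d(s,t)` and `y ∈ P_v(t)` (a predecessor of `t` with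
respect to source `v` in `G`), then `d'(s,y) < d(s,y)`. -/
theorem dist'_lt_dist_of_pred (G G' : WDigraph V) (u v : V)
    (h : IsUpdate G G' u v) (s t y : V)
    (hst : G'.dist s t < G.dist s t) (hy : y ∈ G.pred v t) :
    G'.dist s y < G.dist s y := by
  obtain ⟨hEyt, hyeq, hvt⟩ := hy
  have hK : G.dist s u + (G'.w u v : EReal) + G.dist v t ≤ G'.dist s t := h.key hst
  have h3 : G.dist s t ≤ G.dist s y + (G.w y t : EReal) := G.dist_le_dist_add_w s y t hEyt
  rw [← hyeq] at hK
  -- hK : G.dist s u + w' + (G.dist v y + w y t) ≤ G'.dist s t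
  have hXW : (G.dist s u + (G'.w u v : EReal) + G.dist v y) + (G.w y t : EReal)
      < G.dist s y + (G.w y t : EReal) := by
    calc (G.dist s u + (G'.w u v : EReal) + G.dist v y) + (G.w y t : EReal)
        = G.dist s u + (G'.w u v : EReal) + (G.dist v y + (G.w y t : EReal)) := by
          rw [add_assoc]
      _ ≤ G'.dist s t := hK
      _ < G.dist s t := hst
      _ ≤ G.dist s y + (G.w y t : EReal) := h3
  have hX : G.dist s u + (G'.w u v : EReal) + G.dist v y < G.dist s y := by
    by_contra hcon
    push_neg at hcon
    exact absurd hXW (not_lt.mpr (add_le_add_left hcon _))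
  have hup : G'.dist s y ≤ G.dist s u + (G'.w u v : EReal) + G.dist v y := by
    calc G'.dist s y ≤ G'.dist s v + G'.dist v y := G'.dist_triangle s v y
      _ ≤ (G'.dist s u + (G'.w u v : EReal)) + G.dist v y :=
          add_le_add (G'.dist_le_dist_add_w s u v h.edge') (h.dist_le v y)
      _ ≤ G.dist s u + (G'.w u v : EReal) + G.dist v y :=
          add_le_add (add_le_add (h.dist_le s u) le_rfl) le_rfl
  exact lt_of_le_of_lt hup hX

end WDigraph
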